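/- Conversely, let P be a row-stochastic n × n matrix and R a relation on distributions over n states such that μ R ν implies (μP) R (νP), where R is given by a matrix E containing the all-ones column, i.e., μ R ν iff (μ−ν)E = 0. Then E is P-stable: for every ρ ∈ ℝ^n with ρE = 0 we have ρPE = 0. -/

import Mathlib

open Matrix BigOperators

/-- A probability distribution on `Fin n`, viewed as a vector in `ℝ^n`. -/
def IsDist {n : ℕ} (μ : Fin n → ℝ) : Prop :=
  (∀ i, 0 ≤ μ i) ∧ ∑ i, μ i = 1

/-- Conversely, if the relation `μ R ν ↔ (μ - ν) E = 0` (with `E` containing the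
all-ones column) is preserved by a row-stochastic `P` on distributions, then `E`
is `P`-stable. -/
theorem step_preservation_gives_stable_matrix {n k : ℕ}
    (P : Matrix (Fin n) (Fin n) ℝ)
    (hPnn : ∀ i j, 0 ≤ P i j) (hProw : ∀ i, ∑ j, P i j = 1)
    (E : Matrix (Fin n) (Fin k) ℝ)
    (hones : ∃ c : Fin k, ∀ i, E i c = 1)
    (hpres : ∀ μ ν : Fin n → ℝ, IsDist μ → IsDist ν → Matrix.vecMul (μ - ν) E = 0 →
      Matrix.vecMul (Matrix.vecMul μ P - Matrix.vecMul ν P) E = 0) :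
    ∀ ρ : Fin n → ℝ, Matrix.vecMul ρ E = 0 → Matrix.vecMul (Matrix.vecMul ρ P) E = 0 := by
  intro ρ hρ
  obtain ⟨c, hc⟩ := hones
  have hsum0 : ∑ i, ρ i = 0 := by
    have h := congrFun hρ c
    simpa [Matrix.vecMul, dotProduct, hc] using h
  set s : ℝ := ∑ i, max (ρ i) 0 with hs
  have hsnn : 0 ≤ s := Finset.sum_nonneg fun i _ => le_max_right _ _
  have hneg : ∑ i, max (-ρ i) 0 = s := by
    have : ∑ i, (max (ρ i) 0 - max (-ρ i) 0) = ∑ i, ρ i := by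
      apply Finset.sum_congr rfl
      intro i _
      rcases le_total (ρ i) 0 with h | h
      · simp [max_eq_right h, max_eq_left (neg_nonneg.mpr h)]
      · simp [max_eq_left h, max_eq_right (neg_nonpos.mpr h)]
    rw [Finset.sum_sub_distrib, hsum0] at this
    linarith
  by_cases hs0 : s = 0
  · have hzero : ρ = 0 := by
      funext i
      have h1 : max (ρ i) 0 = 0 := by
        have := Finset.sum_eq_zero_iff_of_nonneg
          (fun i _ => le_max_right (ρ i) 0) |>.mp (hs ▸ hs0) i (Finset.mem_univ i)
        exact this
      have h2 : max (-ρ i) 0 = 0 := by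
        have := Finset.sum_eq_zero_iff_of_nonneg
          (fun i _ => le_max_right (-ρ i) 0) |>.mp (hneg.trans hs0) i (Finset.mem_univ i)
        exact this
      show ρ i = 0
      have := max_eq_right_iff.mp h1
      have := max_eq_right_iff.mp h2
      linarith
    simp [hzero]
  · have hspos : 0 < s := lt_of_le_of_ne hsnn (Ne.symm hs0)
    set μ : Fin n → ℝ := fun i => max (ρ i) 0 / s
    set ν : Fin n → ℝ := fun i => max (-ρ i) 0 / s
    have hμ : IsDist μ := ⟨fun i => div_nonneg (le_max_right _ _) hsnn, by
      simp only [μ, ← Finset.sum_div]; field_simp; exact hs.symm⟩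
    have hν : IsDist ν := ⟨fun i => div_nonneg (le_max_right _ _) hsnn, by
      simp only [ν, ← Finset.sum_div, hneg]; field_simp⟩
    have hdiff : μ - ν = s⁻¹ • ρ := by
      funext i
      simp only [Pi.sub_apply, Pi.smul_apply, smul_eq_mul, μ, ν]
      rcases le_total (ρ i) 0 with h | h
      · rw [max_eq_right h, max_eq_left (neg_nonneg.mpr h)]
        field_simp; ring
      · rw [max_eq_left h, max_eq_right (neg_nonpos.mpr h)]
        field_simp; ring
    have key := hpres μ ν hμ hν (by
      rw [hdiff, Matrix.smul_vecMul, hρ, smul_zero])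
    have hPdiff : Matrix.vecMul μ P - Matrix.vecMul ν P = s⁻¹ • Matrix.vecMul ρ P := by
      rw [← Matrix.sub_vecMul, hdiff, Matrix.smul_vecMul]
    rw [hPdiff, Matrix.smul_vecMul] at key
    have := congrArg (fun v => s • v) key
    simpa [smul_smul, mul_inv_cancel₀ hs0] using this
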